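/- Assume systems (2.15), (3.12) and (5.3) admit unique solutions for all (matched) histories of sup-norm at most φ̄ > 0 and L satisfies condition (5.1). If the trivial solution of (5.3) is asymptotically stable at t₀ (stable at t₀, and there is δ₃ > 0 such that every solution of (5.3) with nonnegative continuous history of sup-norm < δ₃ tends to 0 as t → ∞), then the trivial solutions of (3.12) and of (2.15) are asymptotically stable at t₀. If instead the trivial solution of (5.3) is exponentially stable (there exist δ₅, c₁, c₂ > 0 such that every solution u of (5.3) with nonnegative continuous history ϕ, ‖ϕ‖ ≤ δ₅, satisfies u(t) ≤ c₁‖ϕ‖exp(−c₂(t − t₀)) for all t ≥ t₀), then the trivial solutions of (3.12) and (2.15) are exponentially stable. (Paper's Corollary 2.) -/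

import Mathlib

open Set Filter

noncomputable section

abbrev Euc (n : ℕ) : Type := EuclideanSpace ℝ (Fin n)

/-- A solution of the vector delay system
`x'(t) = A t (x t) + f (t, x t, x (t - h₁ t), …, x (t - hₘ t)) + G t` for `t ≥ t₀`,
with continuous history `φ` on `[t₀ - h̄, t₀]`. -/
def IsVecSol (n m : ℕ) (t₀ hbar : ℝ) (h : Fin m → ℝ → ℝ)
    (A : ℝ → (Euc n →L[ℝ] Euc n)) (f : ℝ → Euc n → (Fin m → Euc n) → Euc n)
    (G : ℝ → Euc n) (φ x : ℝ → Euc n) : Prop :=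
  ContinuousOn x (Ici (t₀ - hbar)) ∧
  (∀ t ∈ Icc (t₀ - hbar) t₀, x t = φ t) ∧
  ∀ t, t₀ ≤ t → HasDerivWithinAt x
    (A t (x t) + f t (x t) (fun i => x (t - h i t)) + G t) (Ici t₀) t

/-- A nonnegative solution of the scalar delay equation
`y'(t) = p t * y t + c t * (L (t, y t, y (t - h₁ t), …, y (t - hₘ t)) + G t)` for `t ≥ t₀`,
with nonnegative continuous history `ϕ` on `[t₀ - h̄, t₀]`. -/
def IsScalSol (m : ℕ) (t₀ hbar : ℝ) (h : Fin m → ℝ → ℝ)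
    (p c : ℝ → ℝ) (L : ℝ → ℝ → (Fin m → ℝ) → ℝ) (G : ℝ → ℝ)
    (ϕ y : ℝ → ℝ) : Prop :=
  ContinuousOn y (Ici (t₀ - hbar)) ∧
  (∀ t ∈ Ici (t₀ - hbar), 0 ≤ y t) ∧
  (∀ t ∈ Icc (t₀ - hbar) t₀, y t = ϕ t) ∧
  ∀ t, t₀ ≤ t → HasDerivWithinAt y
    (p t * y t + c t * (L t (y t) (fun i => y (t - h i t)) + G t)) (Ici t₀) t

/-- The linear majorant `(t, ζ₁, (ζ₂, …, ζ_{m+1})) ↦ μ₁(t,ζ̃)ζ₁ + ∑ μ_{i+1}(t,ζ̃)ζ_{i+1}`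
used in the linearized equations (5.2) and (5.3). -/
def LinL (m : ℕ) (μ : Fin (m + 1) → ℝ → ℝ → ℝ) (ζ : ℝ) :
    ℝ → ℝ → (Fin m → ℝ) → ℝ :=
  fun t a z => μ 0 t ζ * a + ∑ i : Fin m, μ i.succ t ζ * z i


section AUX
open MeasureTheory
section main
variable {n m : ℕ} {t₀ hlow hbar : ℝ}
  {w winv : ℝ → (Euc n →L[ℝ] Euc n)}
  {A : ℝ → (Euc n →L[ℝ] Euc n)}

lemma winv_facts (hn : 0 < n) (hw : ∀ t ≥ t₀, HasDerivWithinAt w ((A t).comp (w t)) (Ici t₀) t)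
    (hwinv : ∀ t ≥ t₀, (w t).comp (winv t) = ContinuousLinearMap.id ℝ (Euc n) ∧
      (winv t).comp (w t) = ContinuousLinearMap.id ℝ (Euc n)) :
    (∀ t ≥ t₀, winv t = Ring.inverse (w t)) ∧
    (∀ t ≥ t₀, HasDerivWithinAt winv (-(winv t * A t)) (Ici t₀) t) ∧
    (∀ t ≥ t₀, 0 < ‖w t‖) := by
  have h1 : ∀ t ≥ t₀, w t * winv t = 1 := by
    intro t ht
    rw [ContinuousLinearMap.mul_def, (hwinv t ht).1, ContinuousLinearMap.one_def]
  have h2 : ∀ t ≥ t₀, winv t * w t = 1 := by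
    intro t ht
    rw [ContinuousLinearMap.mul_def, (hwinv t ht).2, ContinuousLinearMap.one_def]
  have heq : ∀ t ≥ t₀, winv t = Ring.inverse (w t) := by
    intro t ht
    exact (Ring.inverse_unit ⟨w t, winv t, h1 t ht, h2 t ht⟩).symm
  refine ⟨heq, ?_, ?_⟩
  · intro t ht
    have hwd : HasDerivWithinAt w (A t * w t) (Ici t₀) t := by
      rw [ContinuousLinearMap.mul_def]; exact hw t ht
    have hinv := (hasFDerivAt_ringInverse
      (⟨w t, winv t, h1 t ht, h2 t ht⟩ : (Euc n →L[ℝ] Euc n)ˣ)).comp_hasDerivWithinAt t hwd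
    have hW : HasDerivWithinAt winv _ (Ici t₀) t :=
      hinv.congr (fun s hs => heq s hs) (heq t ht)
    convert hW using 1
    simp only [ContinuousLinearMap.neg_apply, ContinuousLinearMap.mulLeftRight_apply,
      Units.inv_mk]
    rw [← mul_assoc (winv t) (A t) (w t), mul_assoc (winv t * A t) (w t) (winv t),
      h1 t ht, mul_one]
  · intro t ht
    have hne : w t ≠ 0 := by
      intro h0
      have h1' := (hwinv t ht).1
      rw [h0, ContinuousLinearMap.zero_comp] at h1'
      have h2' := congrArg (fun T : Euc n →L[ℝ] Euc n =>
        T (EuclideanSpace.single (⟨0, hn⟩ : Fin n) (1 : ℝ))) h1'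
      simp only [ContinuousLinearMap.zero_apply, ContinuousLinearMap.id_apply] at h2'
      have h3 := congrArg (fun v : Euc n => ‖v‖) h2'
      simp [EuclideanSpace.norm_single] at h3
    exact norm_pos_iff.2 hne

end main

section vecbound
variable {n m : ℕ} {t₀ hlow hbar : ℝ}
  {w winv A : ℝ → (Euc n →L[ℝ] Euc n)}
  {f : ℝ → Euc n → (Fin m → Euc n) → Euc n}
  {h : Fin m → ℝ → ℝ} {p c : ℝ → ℝ}

/-- Construction of the differentiable majorant `V t = ‖w t‖ * (‖x t₀‖ + ∫ ‖w⁻¹‖‖f‖)`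
for the norm of a solution of the vector system. -/
lemma vec_majorant (hn : 0 < n) (hpos : 0 < hlow) (hhle : hlow ≤ hbar)
    (hhc : ∀ i, ContinuousOn (h i) (Ici t₀))
    (hhb : ∀ i, ∀ t ≥ t₀, hlow ≤ h i t ∧ h i t ≤ hbar)
    (hfc : ContinuousOn (fun q : ℝ × Euc n × (Fin m → Euc n) => f q.1 q.2.1 q.2.2)
      (Ici t₀ ×ˢ (univ : Set (Euc n × (Fin m → Euc n)))))
    (hw0 : w t₀ = ContinuousLinearMap.id ℝ (Euc n))
    (hw : ∀ t ≥ t₀, HasDerivWithinAt w ((A t).comp (w t)) (Ici t₀) t)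
    (hwinv : ∀ t ≥ t₀, (w t).comp (winv t) = ContinuousLinearMap.id ℝ (Euc n) ∧
      (winv t).comp (w t) = ContinuousLinearMap.id ℝ (Euc n))
    (hp : ∀ t ≥ t₀, HasDerivWithinAt (fun s => Real.log ‖w s‖) (p t) (Ici t₀) t)
    (hc : ∀ t ≥ t₀, c t = ‖w t‖ * ‖winv t‖)
    {φ x : ℝ → Euc n} {G : ℝ → Euc n} (hG : G = fun _ => 0)
    (hx : IsVecSol n m t₀ hbar h A f G φ x) :
    ∃ V : ℝ → ℝ, ContinuousOn V (Ici t₀) ∧ V t₀ = ‖x t₀‖ ∧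
      (∀ t ≥ t₀, ‖x t‖ ≤ V t) ∧
      (∀ t ≥ t₀, HasDerivWithinAt V
        (p t * V t + c t * ‖f t (x t) (fun i => x (t - h i t))‖) (Ici t₀) t) := by
  subst hG
  obtain ⟨hxc, hxh, hxd⟩ := hx
  have hbar0 : 0 ≤ hbar := hpos.le.trans hhle
  have hIci : Ici t₀ ⊆ Ici (t₀ - hbar) := Ici_subset_Ici.2 (by linarith)
  have hxcon : ContinuousOn x (Ici t₀) := hxc.mono hIci
  obtain ⟨heq, hwinvd, hWpos⟩ := winv_facts hn hw hwinv
  have hwinvc : ContinuousOn winv (Ici t₀) := fun t ht => (hwinvd t ht).continuousWithinAt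
  have hwc : ContinuousOn w (Ici t₀) := fun t ht => (hw t ht).continuousWithinAt
  set fval : ℝ → Euc n := fun s => f s (x s) (fun i => x (s - h i s)) with hfval
  have hdelc : ∀ i : Fin m, ContinuousOn (fun s => x (s - h i s)) (Ici t₀) := by
    intro i
    apply hxc.comp (continuousOn_id.sub (hhc i))
    intro s hs
    simp only [mem_Ici] at hs ⊢
    have := (hhb i s hs).2
    show t₀ - hbar ≤ s - h i s
    linarith
  have hpairc : ContinuousOn (fun s : ℝ => (s, x s, fun i : Fin m => x (s - h i s)))
      (Ici t₀) :=
    continuousOn_id.prodMk (hxcon.prodMk (continuousOn_pi.2 hdelc))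
  have hfvalc : ContinuousOn fval (Ici t₀) := by
    apply hfc.comp hpairc
    intro s hs
    exact ⟨hs, mem_univ _⟩
  set z : ℝ → Euc n := fun s => winv s (x s) with hz
  have hzc : ContinuousOn z (Ici t₀) := hwinvc.clm_apply hxcon
  have hzd : ∀ t ≥ t₀, HasDerivWithinAt z (winv t (fval t)) (Ici t₀) t := by
    intro t ht
    have hd := (hwinvd t ht).clm_apply (hxd t ht)
    refine hd.congr_deriv ?_
    simp only [ContinuousLinearMap.neg_apply, ContinuousLinearMap.mul_apply, map_add,
      add_zero]
    abel
  set path : ℝ → ℝ := fun s => ‖winv s‖ * ‖fval s‖ with hpath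
  have hpathc : ContinuousOn path (Ici t₀) := hwinvc.norm.mul hfvalc.norm
  set F : ℝ → ℝ := fun s => path (max s t₀) with hFdef
  have hF : Continuous F :=
    hpathc.comp_continuous (continuous_id.max continuous_const) fun s => le_max_right s t₀
  have hFe : ∀ s ≥ t₀, F s = path s := by
    intro s hs; simp only [hFdef, max_eq_left hs]
  set ρ : ℝ → ℝ := fun t => ‖x t₀‖ + ∫ s in t₀..t, F s with hρ
  have hρd : ∀ t : ℝ, HasDerivAt ρ (F t) t := fun t =>
    ((hF.integral_hasStrictDerivAt t₀ t).hasDerivAt).const_add _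
  have hρc : Continuous ρ := continuous_iff_continuousAt.2 fun t => (hρd t).continuousAt
  set W : ℝ → ℝ := fun t => ‖w t‖ with hW
  have hWd : ∀ t ≥ t₀, HasDerivWithinAt W (p t * W t) (Ici t₀) t := by
    intro t ht
    have he : HasDerivWithinAt (fun s => Real.exp (Real.log ‖w s‖))
        (Real.exp (Real.log ‖w t‖) * p t) (Ici t₀) t := (hp t ht).exp
    have hcongr : HasDerivWithinAt W (Real.exp (Real.log ‖w t‖) * p t) (Ici t₀) t :=
      he.congr (fun s hs => (Real.exp_log (hWpos s hs)).symm)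
        (Real.exp_log (hWpos t ht)).symm
    convert hcongr using 1
    rw [Real.exp_log (hWpos t ht)]
    ring
  refine ⟨fun t => W t * ρ t, (hwc.norm.mul hρc.continuousOn), ?_, ?_, ?_⟩
  · have hρ0 : ρ t₀ = ‖x t₀‖ := by simp [hρ]
    have hW0 : W t₀ = 1 := by
      haveI : Nontrivial (Euc n) := by
        refine nontrivial_of_ne (EuclideanSpace.single (⟨0, hn⟩ : Fin n) (1 : ℝ)) 0 ?_
        intro hsing
        have h3 := congrArg (fun v : Euc n => ‖v‖) hsing
        simp [EuclideanSpace.norm_single] at h3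
      simp [hW, hw0]
    show W t₀ * ρ t₀ = ‖x t₀‖
    rw [hρ0, hW0, one_mul]
  · intro t ht
    have hxz : x t = w t (z t) := by
      have h1 := congrArg (fun T : Euc n →L[ℝ] Euc n => T (x t)) (hwinv t ht).1
      simp only [ContinuousLinearMap.comp_apply, ContinuousLinearMap.id_apply] at h1
      exact h1.symm
    have hb1 : ‖x t‖ ≤ W t * ‖z t‖ := by
      rw [hxz]; exact (w t).le_opNorm (z t)
    have hwinv0 : winv t₀ = ContinuousLinearMap.id ℝ (Euc n) := by
      have h2' := (hwinv t₀ le_rfl).2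
      rw [hw0] at h2'
      simpa using h2'
    have hz0 : z t₀ = x t₀ := by simp [hz, hwinv0]
    have hInt : IntervalIntegrable (fun s => winv s (fval s)) volume t₀ t := by
      apply ContinuousOn.intervalIntegrable
      apply (hwinvc.clm_apply hfvalc).mono
      rw [uIcc_of_le ht]
      exact Icc_subset_Ici_self
    have hFTC : ∫ s in t₀..t, winv s (fval s) = z t - z t₀ := by
      apply intervalIntegral.integral_eq_sub_of_hasDeriv_right_of_le ht
      · exact hzc.mono (Icc_subset_Ici_self)
      · intro s hs
        exact (hzd s hs.1.le).mono fun y hy => le_trans hs.1.le hy.le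
      · exact hInt
    have hnormInt : IntervalIntegrable (fun s => ‖winv s (fval s)‖) volume t₀ t := hInt.norm
    have hFInt : IntervalIntegrable F volume t₀ t := hF.intervalIntegrable _ _
    have hb2 : ‖∫ s in t₀..t, winv s (fval s)‖ ≤ ∫ s in t₀..t, ‖winv s (fval s)‖ :=
      intervalIntegral.norm_integral_le_integral_norm ht
    have hb3 : ∫ s in t₀..t, ‖winv s (fval s)‖ ≤ ∫ s in t₀..t, F s := by
      apply intervalIntegral.integral_mono_on ht hnormInt hFInt
      intro s hs
      rw [hFe s hs.1]
      exact (winv s).le_opNorm (fval s)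
    have hb4 : ‖z t - z t₀‖ ≤ ∫ s in t₀..t, F s := by
      rw [← hFTC]; exact hb2.trans hb3
    have hb5 : ‖z t‖ ≤ ρ t := by
      have h6 : ‖z t‖ ≤ ‖z t₀‖ + ‖z t - z t₀‖ := by
        have := norm_add_le (z t₀) (z t - z t₀)
        simpa using this
      rw [hz0] at h6 hb4
      simp only [hρ]
      linarith
    calc ‖x t‖ ≤ W t * ‖z t‖ := hb1
      _ ≤ W t * ρ t := by
          apply mul_le_mul_of_nonneg_left hb5
          exact norm_nonneg _
  · intro t ht
    have hd := (hWd t ht).mul ((hρd t).hasDerivWithinAt)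
    refine hd.congr_deriv ?_
    symm
    rw [hFe t ht, hc t ht]
    show p t * (W t * ρ t) + ‖w t‖ * ‖winv t‖ * ‖fval t‖
      = p t * W t * ρ t + W t * (‖winv t‖ * ‖fval t‖)
    ring

end vecbound

/-- Core comparison lemma: a strict subsolution of the linear scalar delay equation (5.3)
stays strictly below any solution. -/
lemma cmp_lemma {t₀ hbar : ℝ} (hbar0 : 0 ≤ hbar) {m : ℕ} {h : Fin m → ℝ → ℝ}
    {p c : ℝ → ℝ} {μ : Fin (m + 1) → ℝ → ℝ → ℝ} {ζ : ℝ}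
    {P : ℝ → ℝ} (hP : ∀ t ≥ t₀, HasDerivWithinAt P (p t) (Ici t₀) t)
    {q : ℝ → ℝ} (hq : Continuous q) (hqe : ∀ t ≥ t₀, q t = c t * μ 0 t ζ)
    {ϱ u : ℝ → ℝ} (hu : IsScalSol m t₀ hbar h p c (LinL m μ ζ) (fun _ => 0) ϱ u)
    {V D : ℝ → ℝ} (hVc : ContinuousOn V (Ici t₀))
    (hVd : ∀ t ≥ t₀, HasDerivWithinAt V (D t) (Ici t₀) t)
    (h0 : V t₀ < u t₀)
    (hD : ∀ t ≥ t₀, (∀ s ∈ Icc t₀ t, V s ≤ u s) →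
      D t ≤ p t * V t + c t * (μ 0 t ζ * V t + ∑ i : Fin m, μ i.succ t ζ * u (t - h i t))) :
    ∀ t ≥ t₀, V t < u t := by
  obtain ⟨huc, hun, huh, hud⟩ := hu
  have hucon : ContinuousOn u (Ici t₀) := huc.mono (Ici_subset_Ici.2 (by linarith))
  by_contra hcon
  push_neg at hcon
  obtain ⟨T, hT, hTle⟩ := hcon
  set S : Set ℝ := {t | t₀ ≤ t ∧ u t ≤ V t} with hSdef
  have hSne : S.Nonempty := ⟨T, hT, hTle⟩
  have hSeq : S = Ici t₀ ∩ (fun t => V t - u t) ⁻¹' Ici 0 := by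
    ext t; simp [hSdef, sub_nonneg, and_comm]
  have hSc : IsClosed S := by
    rw [hSeq]
    exact (hVc.sub hucon).preimage_isClosed_of_isClosed isClosed_Ici isClosed_Ici
  have hbdd : BddBelow S := ⟨t₀, fun s hs => hs.1⟩
  set t₁ := sInf S with ht₁def
  have ht₁S : t₁ ∈ S := hSc.csInf_mem hSne hbdd
  have ht₁ : t₀ ≤ t₁ := ht₁S.1
  have hlt : ∀ s, t₀ ≤ s → s < t₁ → V s < u s := by
    intro s hs hslt
    by_contra hns
    push_neg at hns
    exact absurd (csInf_le hbdd ⟨hs, hns⟩) (not_le.2 hslt)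
  have ht₁0 : t₀ < t₁ := by
    rcases eq_or_lt_of_le ht₁ with heq | hlt'
    · exfalso; have h2 := ht₁S.2; rw [← heq] at h2; linarith
    · exact hlt'
  -- integrating factor
  set I : ℝ → ℝ := fun r => ∫ s in t₀..r, q s with hIdef
  set E : ℝ → ℝ := fun t => Real.exp (-(P t + I t)) with hEdef
  set g : ℝ → ℝ := fun t => (V t - u t) * E t with hgdef
  have hId : ∀ t, HasDerivAt I (q t) t := fun t =>
    (hq.integral_hasStrictDerivAt t₀ t).hasDerivAt
  have hIc : Continuous I := by
    rw [continuous_iff_continuousAt]; exact fun t => (hId t).continuousAt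
  have hPc : ContinuousOn P (Ici t₀) := fun t ht => (hP t ht).continuousWithinAt
  have hEc : ContinuousOn E (Ici t₀) := by
    apply Real.continuous_exp.comp_continuousOn
    exact (hPc.add hIc.continuousOn).neg
  have hEpos : ∀ t, 0 < E t := fun t => Real.exp_pos _
  have hgc : ContinuousOn g (Ici t₀) := ((hVc.sub hucon).mul hEc)
  have hgd : ∀ t ≥ t₀, HasDerivWithinAt g
      ((D t - (p t * u t + c t * (LinL m μ ζ t (u t) (fun i => u (t - h i t)) + 0))) * E t
        + (V t - u t) * (Real.exp (-(P t + I t)) * (-(p t + q t)))) (Ici t₀) t := by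
    intro t ht
    have hd : HasDerivWithinAt (fun s => V s - u s)
        (D t - (p t * u t + c t * (LinL m μ ζ t (u t) (fun i => u (t - h i t)) + 0)))
        (Ici t₀) t := (hVd t ht).sub (hud t ht)
    have hE : HasDerivWithinAt E (Real.exp (-(P t + I t)) * (-(p t + q t))) (Ici t₀) t := by
      exact (((hP t ht).add (hId t).hasDerivWithinAt).neg).exp
    exact hd.mul hE
  -- g is antitone on Icc t₀ t₁
  have hg_anti : AntitoneOn g (Icc t₀ t₁) := by
    apply antitoneOn_of_deriv_nonpos (convex_Icc t₀ t₁)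
    · exact hgc.mono (Icc_subset_Ici_self)
    · intro t ht
      rw [interior_Icc] at ht
      have ht' : t₀ ≤ t := ht.1.le
      have : Ici t₀ ∈ nhds t := Ici_mem_nhds ht.1
      exact ((hgd t ht').hasDerivAt this).differentiableAt.differentiableWithinAt
    · intro t ht
      rw [interior_Icc] at ht
      have ht' : t₀ ≤ t := ht.1.le
      have hmem : Ici t₀ ∈ nhds t := Ici_mem_nhds ht.1
      rw [((hgd t ht').hasDerivAt hmem).deriv]
      -- show the derivative value is ≤ 0
      have hprem : ∀ s ∈ Icc t₀ t, V s ≤ u s := fun s hs =>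
        (hlt s hs.1 (lt_of_le_of_lt hs.2 ht.2)).le
      have hDle := hD t ht' hprem
      have hkey : D t - (p t * u t + c t * (LinL m μ ζ t (u t) (fun i => u (t - h i t)) + 0))
          ≤ (p t + q t) * (V t - u t) := by
        have hlin : LinL m μ ζ t (u t) (fun i => u (t - h i t))
            = μ 0 t ζ * u t + ∑ i : Fin m, μ i.succ t ζ * u (t - h i t) := rfl
        rw [hlin, hqe t ht']
        nlinarith [hDle]
      have hEt : E t = Real.exp (-(P t + I t)) := rfl
      calc (D t - (p t * u t + c t * (LinL m μ ζ t (u t) (fun i => u (t - h i t)) + 0))) * E t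
            + (V t - u t) * (Real.exp (-(P t + I t)) * (-(p t + q t)))
          = ((D t - (p t * u t + c t * (LinL m μ ζ t (u t) (fun i => u (t - h i t)) + 0)))
              - (p t + q t) * (V t - u t)) * E t := by rw [hEt]; ring
        _ ≤ 0 := mul_nonpos_of_nonpos_of_nonneg (by linarith) (hEpos t).le
  have h1 : g t₁ ≤ g t₀ := hg_anti ⟨le_refl _, ht₁⟩ ⟨ht₁, le_refl _⟩ ht₁
  have h2 : g t₀ < 0 := mul_neg_of_neg_of_pos (by linarith) (hEpos t₀)
  have h3 : 0 ≤ g t₁ := mul_nonneg (by linarith [ht₁S.2]) (hEpos t₁).le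
  linarith

lemma dom_scal {t₀ hlow hbar : ℝ} (hpos : 0 < hlow) (hhle : hlow ≤ hbar)
    {m : ℕ} {h : Fin m → ℝ → ℝ}
    (hhb : ∀ i, ∀ t ≥ t₀, hlow ≤ h i t ∧ h i t ≤ hbar)
    {p c : ℝ → ℝ} (hcnn : ∀ t ≥ t₀, 0 ≤ c t)
    {μ : Fin (m + 1) → ℝ → ℝ → ℝ} {ζtil : ℝ} (hζ : 0 < ζtil)
    (hμnn : ∀ i, ∀ t ≥ t₀, ∀ a : ℝ, 0 ≤ a → 0 ≤ μ i t a)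
    {L : ℝ → ℝ → (Fin m → ℝ) → ℝ}
    (h51 : ∀ t ≥ t₀, ∀ a : ℝ, ∀ z : Fin m → ℝ, 0 ≤ a → a ≤ ζtil →
      (∀ i, 0 ≤ z i ∧ z i ≤ ζtil) →
      L t a z ≤ μ 0 t ζtil * a + ∑ i : Fin m, μ i.succ t ζtil * z i)
    {P : ℝ → ℝ} (hP : ∀ t ≥ t₀, HasDerivWithinAt P (p t) (Ici t₀) t)
    {q : ℝ → ℝ} (hq : Continuous q) (hqe : ∀ t ≥ t₀, q t = c t * μ 0 t ζtil)
    {ϕ ϱ y u : ℝ → ℝ}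
    (hy : IsScalSol m t₀ hbar h p c L (fun _ => 0) ϕ y)
    (hu : IsScalSol m t₀ hbar h p c (LinL m μ ζtil) (fun _ => 0) ϱ u)
    (hhist : ∀ s ∈ Icc (t₀ - hbar) t₀, ϕ s < ϱ s)
    (hϕζ : ∀ s ∈ Icc (t₀ - hbar) t₀, ϕ s ≤ ζtil)
    (hub : ∀ s ≥ t₀, u s ≤ ζtil) :
    ∀ t ≥ t₀, y t < u t := by
  have hbar0 : 0 ≤ hbar := le_trans hpos.le hhle
  obtain ⟨hyc, hyn, hyh, hyd⟩ := hy
  have ht₀Icc : t₀ ∈ Icc (t₀ - hbar) t₀ := ⟨by linarith, le_refl _⟩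
  have h0 : y t₀ < u t₀ := by
    rw [hyh t₀ ht₀Icc, hu.2.2.1 t₀ ht₀Icc]
    exact hhist t₀ ht₀Icc
  refine cmp_lemma hbar0 hP hq hqe hu (hyc.mono (Ici_subset_Ici.2 (by linarith))) hyd h0 ?_
  intro t ht hprem
  have hy0 : 0 ≤ y t := hyn t (by simp only [mem_Ici]; linarith)
  have hytu : y t ≤ u t := hprem t ⟨ht, le_refl _⟩
  have hytζ : y t ≤ ζtil := hytu.trans (hub t ht)
  have hdel : ∀ i : Fin m, (0 ≤ y (t - h i t) ∧ y (t - h i t) ≤ ζtil) ∧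
      y (t - h i t) ≤ u (t - h i t) := by
    intro i
    obtain ⟨hl, hr⟩ := hhb i t ht
    have hs1 : t₀ - hbar ≤ t - h i t := by linarith
    have hs2 : t - h i t ≤ t := by linarith
    have hy0s : 0 ≤ y (t - h i t) := hyn _ (by simp only [mem_Ici]; linarith)
    rcases le_total (t - h i t) t₀ with hc1 | hc2
    · have heq : y (t - h i t) = ϕ (t - h i t) := hyh _ ⟨hs1, hc1⟩
      have hus : u (t - h i t) = ϱ (t - h i t) := hu.2.2.1 _ ⟨hs1, hc1⟩
      refine ⟨⟨hy0s, ?_⟩, ?_⟩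
      · rw [heq]; exact hϕζ _ ⟨hs1, hc1⟩
      · rw [heq, hus]; exact (hhist _ ⟨hs1, hc1⟩).le
    · have hsu : y (t - h i t) ≤ u (t - h i t) := hprem _ ⟨hc2, hs2⟩
      exact ⟨⟨hy0s, hsu.trans (hub _ hc2)⟩, hsu⟩
  have hL : L t (y t) (fun i => y (t - h i t)) ≤
      μ 0 t ζtil * y t + ∑ i : Fin m, μ i.succ t ζtil * y (t - h i t) :=
    h51 t ht _ _ hy0 hytζ fun i => (hdel i).1
  have hsum : ∑ i : Fin m, μ i.succ t ζtil * y (t - h i t) ≤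
      ∑ i : Fin m, μ i.succ t ζtil * u (t - h i t) :=
    Finset.sum_le_sum fun i _ =>
      mul_le_mul_of_nonneg_left (hdel i).2 (hμnn i.succ t ht ζtil hζ.le)
  have hc0 := hcnn t ht
  have hmul := mul_le_mul_of_nonneg_left
    (show L t (y t) (fun i => y (t - h i t)) + (fun _ : ℝ => (0:ℝ)) t ≤
      μ 0 t ζtil * y t + ∑ i : Fin m, μ i.succ t ζtil * u (t - h i t) by
        simp only [add_zero]; linarith) hc0
  linarith

section domvec
variable {n m : ℕ} {t₀ hlow hbar : ℝ}
  {w winv A : ℝ → (Euc n →L[ℝ] Euc n)}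
  {f : ℝ → Euc n → (Fin m → Euc n) → Euc n}
  {h : Fin m → ℝ → ℝ} {p c : ℝ → ℝ}

lemma dom_vec (hn : 0 < n) (hpos : 0 < hlow) (hhle : hlow ≤ hbar)
    (hhc : ∀ i, ContinuousOn (h i) (Ici t₀))
    (hhb : ∀ i, ∀ t ≥ t₀, hlow ≤ h i t ∧ h i t ≤ hbar)
    (hfc : ContinuousOn (fun q : ℝ × Euc n × (Fin m → Euc n) => f q.1 q.2.1 q.2.2)
      (Ici t₀ ×ˢ (univ : Set (Euc n × (Fin m → Euc n)))))
    (hw0 : w t₀ = ContinuousLinearMap.id ℝ (Euc n))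
    (hw : ∀ t ≥ t₀, HasDerivWithinAt w ((A t).comp (w t)) (Ici t₀) t)
    (hwinv : ∀ t ≥ t₀, (w t).comp (winv t) = ContinuousLinearMap.id ℝ (Euc n) ∧
      (winv t).comp (w t) = ContinuousLinearMap.id ℝ (Euc n))
    (hp : ∀ t ≥ t₀, HasDerivWithinAt (fun s => Real.log ‖w s‖) (p t) (Ici t₀) t)
    (hc : ∀ t ≥ t₀, c t = ‖w t‖ * ‖winv t‖)
    {μ : Fin (m + 1) → ℝ → ℝ → ℝ} {ζtil : ℝ} (hζ : 0 < ζtil)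
    (hμnn : ∀ i, ∀ t ≥ t₀, ∀ a : ℝ, 0 ≤ a → 0 ≤ μ i t a)
    {L : ℝ → ℝ → (Fin m → ℝ) → ℝ}
    (hLf : ∀ t ≥ t₀, ∀ a : Euc n, ∀ z : Fin m → Euc n,
      ‖f t a z‖ ≤ L t ‖a‖ (fun i => ‖z i‖))
    (h51 : ∀ t ≥ t₀, ∀ a : ℝ, ∀ z : Fin m → ℝ, 0 ≤ a → a ≤ ζtil →
      (∀ i, 0 ≤ z i ∧ z i ≤ ζtil) →
      L t a z ≤ μ 0 t ζtil * a + ∑ i : Fin m, μ i.succ t ζtil * z i)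
    {q : ℝ → ℝ} (hq : Continuous q) (hqe : ∀ t ≥ t₀, q t = c t * μ 0 t ζtil)
    {φ x : ℝ → Euc n} {ϱ u : ℝ → ℝ}
    (hx : IsVecSol n m t₀ hbar h A f (fun _ => 0) φ x)
    (hu : IsScalSol m t₀ hbar h p c (LinL m μ ζtil) (fun _ => 0) ϱ u)
    (hhist : ∀ s ∈ Icc (t₀ - hbar) t₀, ‖φ s‖ < ϱ s)
    (hφζ : ∀ s ∈ Icc (t₀ - hbar) t₀, ‖φ s‖ ≤ ζtil)
    (hub : ∀ s ≥ t₀, u s ≤ ζtil) :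
    ∀ t ≥ t₀, ‖x t‖ < u t := by
  have hbar0 : 0 ≤ hbar := hpos.le.trans hhle
  obtain ⟨V, hVc, hV0, hxV, hVd⟩ :=
    vec_majorant hn hpos hhle hhc hhb hfc hw0 hw hwinv hp hc rfl hx
  have ht₀Icc : t₀ ∈ Icc (t₀ - hbar) t₀ := ⟨by linarith, le_rfl⟩
  have h0 : V t₀ < u t₀ := by
    rw [hV0, hx.2.1 t₀ ht₀Icc, hu.2.2.1 t₀ ht₀Icc]
    exact hhist t₀ ht₀Icc
  have key : ∀ t ≥ t₀, V t < u t := by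
    refine cmp_lemma hbar0 hp hq hqe hu hVc hVd h0 ?_
    intro t ht hprem
    have hx0 : (0:ℝ) ≤ ‖x t‖ := norm_nonneg _
    have hxVt : ‖x t‖ ≤ V t := hxV t ht
    have hVu : V t ≤ u t := hprem t ⟨ht, le_rfl⟩
    have hxζ : ‖x t‖ ≤ ζtil := le_trans (hxVt.trans hVu) (hub t ht)
    have hdel : ∀ i : Fin m, (0 ≤ ‖x (t - h i t)‖ ∧ ‖x (t - h i t)‖ ≤ ζtil) ∧
        ‖x (t - h i t)‖ ≤ u (t - h i t) := by
      intro i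
      obtain ⟨hl, hr⟩ := hhb i t ht
      have hs1 : t₀ - hbar ≤ t - h i t := by linarith
      have hs2 : t - h i t ≤ t := by linarith
      rcases le_total (t - h i t) t₀ with hc1 | hc2
      · have heqx : x (t - h i t) = φ (t - h i t) := hx.2.1 _ ⟨hs1, hc1⟩
        have hus : u (t - h i t) = ϱ (t - h i t) := hu.2.2.1 _ ⟨hs1, hc1⟩
        refine ⟨⟨norm_nonneg _, ?_⟩, ?_⟩
        · rw [heqx]; exact hφζ _ ⟨hs1, hc1⟩
        · rw [heqx, hus]; exact (hhist _ ⟨hs1, hc1⟩).le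
      · have hsu : ‖x (t - h i t)‖ ≤ u (t - h i t) :=
          le_trans (hxV _ hc2) (hprem _ ⟨hc2, hs2⟩)
        exact ⟨⟨norm_nonneg _, hsu.trans (hub _ hc2)⟩, hsu⟩
    have hLb := hLf t ht (x t) (fun i => x (t - h i t))
    have h51b := h51 t ht ‖x t‖ (fun i => ‖x (t - h i t)‖) hx0 hxζ fun i => (hdel i).1
    have hμ0 : μ 0 t ζtil * ‖x t‖ ≤ μ 0 t ζtil * V t :=
      mul_le_mul_of_nonneg_left hxVt (hμnn 0 t ht ζtil hζ.le)
    have hsum : ∑ i : Fin m, μ i.succ t ζtil * ‖x (t - h i t)‖ ≤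
        ∑ i : Fin m, μ i.succ t ζtil * u (t - h i t) :=
      Finset.sum_le_sum fun i _ =>
        mul_le_mul_of_nonneg_left (hdel i).2 (hμnn i.succ t ht ζtil hζ.le)
    have hcnn : 0 ≤ c t := by
      rw [hc t ht]; positivity
    have hmul := mul_le_mul_of_nonneg_left
      (show ‖f t (x t) (fun i => x (t - h i t))‖ ≤
        μ 0 t ζtil * V t + ∑ i : Fin m, μ i.succ t ζtil * u (t - h i t) by linarith) hcnn
    linarith
  intro t ht
  exact lt_of_le_of_lt (hxV t ht) (key t ht)

end domvec

end AUX

set_option maxHeartbeats 3000000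

/-- Paper's Corollary 2: asymptotic (resp. exponential) stability of the trivial solution
of the linear scalar equation (5.3) implies asymptotic (resp. exponential) stability of
the trivial solutions of (3.12) and (2.15). -/
theorem stmt16
    (t₀ : ℝ) (n m : ℕ) (h : Fin m → ℝ → ℝ) (hlow hbar : ℝ)
    (hpos : 0 < hlow) (hhle : hlow ≤ hbar)
    (hhc : ∀ i, ContinuousOn (h i) (Ici t₀))
    (hhb : ∀ i, ∀ t ≥ t₀, hlow ≤ h i t ∧ h i t ≤ hbar)
    (A : ℝ → (Euc n →L[ℝ] Euc n)) (hA : ContinuousOn A (Ici t₀))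
    (f : ℝ → Euc n → (Fin m → Euc n) → Euc n)
    (hfc : ContinuousOn (fun q : ℝ × Euc n × (Fin m → Euc n) => f q.1 q.2.1 q.2.2)
      (Ici t₀ ×ˢ (univ : Set (Euc n × (Fin m → Euc n)))))
    (hfl : ∀ t ≥ t₀, ∀ z : Fin m → Euc n, LocallyLipschitz (fun a => f t a z))
    (hf0 : ∀ t ≥ t₀, f t 0 (fun _ => 0) = 0)
    (L : ℝ → ℝ → (Fin m → ℝ) → ℝ)
    (hLc : ContinuousOn (fun q : ℝ × ℝ × (Fin m → ℝ) => L q.1 q.2.1 q.2.2)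
      (Ici t₀ ×ˢ (univ : Set (ℝ × (Fin m → ℝ)))))
    (hLl : ∀ t ≥ t₀, ∀ z : Fin m → ℝ, LocallyLipschitz (fun a => L t a z))
    (hLnn : ∀ t ≥ t₀, ∀ a : ℝ, 0 ≤ a → ∀ z : Fin m → ℝ, (∀ i, 0 ≤ z i) → 0 ≤ L t a z)
    (hLmono : ∀ t ≥ t₀, ∀ a : ℝ, ∀ z z' : Fin m → ℝ, (∀ i, z i ≤ z' i) →
      L t a z ≤ L t a z')
    (hL0 : ∀ t ≥ t₀, L t 0 (fun _ => 0) = 0)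
    (hLf : ∀ t ≥ t₀, ∀ a : Euc n, ∀ z : Fin m → Euc n,
      ‖f t a z‖ ≤ L t ‖a‖ (fun i => ‖z i‖))
    (w winv : ℝ → (Euc n →L[ℝ] Euc n))
    (hw0 : w t₀ = ContinuousLinearMap.id ℝ (Euc n))
    (hw : ∀ t ≥ t₀, HasDerivWithinAt w ((A t).comp (w t)) (Ici t₀) t)
    (hwinv : ∀ t ≥ t₀, (w t).comp (winv t) = ContinuousLinearMap.id ℝ (Euc n) ∧
      (winv t).comp (w t) = ContinuousLinearMap.id ℝ (Euc n))
    (p c : ℝ → ℝ)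
    (hp : ∀ t ≥ t₀, HasDerivWithinAt (fun s => Real.log ‖w s‖) (p t) (Ici t₀) t)
    (hc : ∀ t ≥ t₀, c t = ‖w t‖ * ‖winv t‖)
    (ζtil : ℝ) (hζ : 0 < ζtil)
    (μ : Fin (m + 1) → ℝ → ℝ → ℝ)
    (hμc : ∀ i, ContinuousOn (fun q : ℝ × ℝ => μ i q.1 q.2) (Ici t₀ ×ˢ Ici (0 : ℝ)))
    (hμnn : ∀ i, ∀ t ≥ t₀, ∀ a : ℝ, 0 ≤ a → 0 ≤ μ i t a)
    -- condition (5.1)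
    (h51 : ∀ t ≥ t₀, ∀ a : ℝ, ∀ z : Fin m → ℝ, 0 ≤ a → a ≤ ζtil →
      (∀ i, 0 ≤ z i ∧ z i ≤ ζtil) →
      L t a z ≤ μ 0 t ζtil * a + ∑ i : Fin m, μ i.succ t ζtil * z i)
    (φbar : ℝ) (hφbar : 0 < φbar)
    -- unique solvability of (2.15), (3.12) and (5.3) for all matched histories of
    -- sup-norm at most `φ̄`
    (hexun : ∀ φ : ℝ → Euc n, ContinuousOn φ (Icc (t₀ - hbar) t₀) →
      (∀ t ∈ Icc (t₀ - hbar) t₀, ‖φ t‖ ≤ φbar) →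
      (∃ x, IsVecSol n m t₀ hbar h A f (fun _ => 0) φ x) ∧
      (∀ x x', IsVecSol n m t₀ hbar h A f (fun _ => 0) φ x → IsVecSol n m t₀ hbar h A f (fun _ => 0) φ x' → ∀ t ≥ t₀, x t = x' t) ∧
      (∃ y, IsScalSol m t₀ hbar h p c L (fun _ => 0) (fun t => ‖φ t‖) y) ∧
      (∀ y y', IsScalSol m t₀ hbar h p c L (fun _ => 0) (fun t => ‖φ t‖) y → IsScalSol m t₀ hbar h p c L (fun _ => 0) (fun t => ‖φ t‖) y' → ∀ t ≥ t₀, y t = y' t) ∧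
      (∃ u, IsScalSol m t₀ hbar h p c (LinL m μ ζtil) (fun _ => 0) (fun t => ‖φ t‖) u) ∧
      (∀ u u', IsScalSol m t₀ hbar h p c (LinL m μ ζtil) (fun _ => 0) (fun t => ‖φ t‖) u → IsScalSol m t₀ hbar h p c (LinL m μ ζtil) (fun _ => 0) (fun t => ‖φ t‖) u' → ∀ t ≥ t₀, u t = u' t))
    : -- asymptotic stability case
    (((∀ ε > 0, ∃ δ > 0, ∀ ϕ y : ℝ → ℝ,
      ContinuousOn ϕ (Icc (t₀ - hbar) t₀) → (∀ t ∈ Icc (t₀ - hbar) t₀, 0 ≤ ϕ t) →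
      (∀ t ∈ Icc (t₀ - hbar) t₀, ϕ t < δ) → IsScalSol m t₀ hbar h p c (LinL m μ ζtil) (fun _ => 0) ϕ y →
      ∀ t ≥ t₀, y t < ε) ∧
      (∃ δ₃ > 0, ∀ ϕ y : ℝ → ℝ,
      ContinuousOn ϕ (Icc (t₀ - hbar) t₀) → (∀ t ∈ Icc (t₀ - hbar) t₀, 0 ≤ ϕ t) →
      (∀ t ∈ Icc (t₀ - hbar) t₀, ϕ t < δ₃) → IsScalSol m t₀ hbar h p c (LinL m μ ζtil) (fun _ => 0) ϕ y →
      Tendsto y atTop (nhds 0))) →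
     ((∀ ε > 0, ∃ δ > 0, ∀ ϕ y : ℝ → ℝ,
      ContinuousOn ϕ (Icc (t₀ - hbar) t₀) → (∀ t ∈ Icc (t₀ - hbar) t₀, 0 ≤ ϕ t) →
      (∀ t ∈ Icc (t₀ - hbar) t₀, ϕ t < δ) → IsScalSol m t₀ hbar h p c L (fun _ => 0) ϕ y →
      ∀ t ≥ t₀, y t < ε) ∧
      (∃ δ₃ > 0, ∀ ϕ y : ℝ → ℝ,
      ContinuousOn ϕ (Icc (t₀ - hbar) t₀) → (∀ t ∈ Icc (t₀ - hbar) t₀, 0 ≤ ϕ t) →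
      (∀ t ∈ Icc (t₀ - hbar) t₀, ϕ t < δ₃) → IsScalSol m t₀ hbar h p c L (fun _ => 0) ϕ y →
      Tendsto y atTop (nhds 0))) ∧
     ((∀ ε > 0, ∃ δ > 0, ∀ (φ : ℝ → Euc n) (x : ℝ → Euc n),
      ContinuousOn φ (Icc (t₀ - hbar) t₀) →
      (∀ t ∈ Icc (t₀ - hbar) t₀, ‖φ t‖ < δ) → IsVecSol n m t₀ hbar h A f (fun _ => 0) φ x →
      ∀ t ≥ t₀, ‖x t‖ < ε) ∧
      (∃ δ₃ > 0, ∀ (φ : ℝ → Euc n) (x : ℝ → Euc n),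
      ContinuousOn φ (Icc (t₀ - hbar) t₀) →
      (∀ t ∈ Icc (t₀ - hbar) t₀, ‖φ t‖ < δ₃) → IsVecSol n m t₀ hbar h A f (fun _ => 0) φ x →
      Tendsto (fun t => ‖x t‖) atTop (nhds 0)))) ∧
    -- exponential stability case
    ((∃ δ₅ > 0, ∃ c₁ > 0, ∃ c₂ > 0, ∀ ϕ y : ℝ → ℝ,
      ContinuousOn ϕ (Icc (t₀ - hbar) t₀) → (∀ t ∈ Icc (t₀ - hbar) t₀, 0 ≤ ϕ t) →
      (∀ t ∈ Icc (t₀ - hbar) t₀, ϕ t ≤ δ₅) → IsScalSol m t₀ hbar h p c (LinL m μ ζtil) (fun _ => 0) ϕ y →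
      ∀ t ≥ t₀, y t ≤ c₁ * sSup (ϕ '' Icc (t₀ - hbar) t₀) * Real.exp (-c₂ * (t - t₀))) →
     (∃ δ₅ > 0, ∃ c₁ > 0, ∃ c₂ > 0, ∀ ϕ y : ℝ → ℝ,
      ContinuousOn ϕ (Icc (t₀ - hbar) t₀) → (∀ t ∈ Icc (t₀ - hbar) t₀, 0 ≤ ϕ t) →
      (∀ t ∈ Icc (t₀ - hbar) t₀, ϕ t ≤ δ₅) → IsScalSol m t₀ hbar h p c L (fun _ => 0) ϕ y →
      ∀ t ≥ t₀, y t ≤ c₁ * sSup (ϕ '' Icc (t₀ - hbar) t₀) * Real.exp (-c₂ * (t - t₀))) ∧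
     (∃ δ₅ > 0, ∃ c₁ > 0, ∃ c₂ > 0, ∀ (φ : ℝ → Euc n) (x : ℝ → Euc n),
      ContinuousOn φ (Icc (t₀ - hbar) t₀) →
      (∀ t ∈ Icc (t₀ - hbar) t₀, ‖φ t‖ ≤ δ₅) → IsVecSol n m t₀ hbar h A f (fun _ => 0) φ x →
      ∀ t ≥ t₀, ‖x t‖ ≤ c₁ * sSup ((fun s => ‖φ s‖) '' Icc (t₀ - hbar) t₀) * Real.exp (-c₂ * (t - t₀)))) := by
  have hbar0 : 0 ≤ hbar := hpos.le.trans hhle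
  have hIccne : t₀ ∈ Icc (t₀ - hbar) t₀ := ⟨by linarith, le_rfl⟩
  rcases Nat.eq_zero_or_pos n with hn0 | hn
  · -- degenerate case n = 0 : the premises are contradictory
    subst hn0
    have hczero : ∀ t ≥ t₀, c t = 0 := by
      intro t ht
      rw [hc t ht]
      have hwz : w t = 0 := Subsingleton.elim _ _
      rw [hwz, norm_zero, zero_mul]
    have hpzero : ∀ t ≥ t₀, p t = 0 := by
      intro t ht
      have hconst : (fun s : ℝ => Real.log ‖w s‖) = fun _ => (0 : ℝ) := by
        funext s
        have hwz : w s = 0 := Subsingleton.elim _ _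
        rw [hwz, norm_zero, Real.log_zero]
      have h1 := hp t ht
      rw [hconst] at h1
      have h2 : HasDerivWithinAt (fun _ : ℝ => (0 : ℝ)) 0 (Ici t₀) t :=
        hasDerivWithinAt_const _ _ _
      have e1 := h1.derivWithin (uniqueDiffOn_Ici t₀ t ht)
      have e2 := h2.derivWithin (uniqueDiffOn_Ici t₀ t ht)
      rw [← e1, e2]
    have hconstSol : ∀ a : ℝ, 0 ≤ a →
        IsScalSol m t₀ hbar h p c (LinL m μ ζtil) (fun _ => 0) (fun _ => a) (fun _ => a) := by
      intro a ha
      refine ⟨continuousOn_const, fun t _ => ha, fun t _ => rfl, ?_⟩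
      intro t ht
      have hval : p t * a + c t * (LinL m μ ζtil t a (fun _ => a) + 0) = 0 := by
        rw [hpzero t ht, hczero t ht]; ring
      have := hasDerivWithinAt_const t (Ici t₀) a
      rw [← hval] at this
      exact this
    constructor
    · rintro ⟨hstab, δ₃, hδ₃, hattr⟩
      exfalso
      have h1 := hattr (fun _ => δ₃ / 2) (fun _ => δ₃ / 2) continuousOn_const
        (fun t _ => by positivity) (fun t _ => by linarith) (hconstSol _ (by positivity))
      have h2 : (0 : ℝ) = δ₃ / 2 := tendsto_nhds_unique h1 tendsto_const_nhds
      linarith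
    · rintro ⟨δ₅, hδ₅, c₁, hc₁, c₂, hc₂, hbound⟩
      exfalso
      have hb := hbound (fun _ => δ₅) (fun _ => δ₅) continuousOn_const
        (fun t _ => hδ₅.le) (fun t _ => le_rfl) (hconstSol _ hδ₅.le)
      have hne : (Icc (t₀ - hbar) t₀).Nonempty := ⟨t₀, hIccne⟩
      have hS : sSup ((fun _ : ℝ => δ₅) '' Icc (t₀ - hbar) t₀) = δ₅ := by
        rw [hne.image_const, csSup_singleton]
      have hT : Tendsto (fun t : ℝ => c₁ * δ₅ * Real.exp (-c₂ * (t - t₀))) atTop (nhds 0) := by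
        have h1 : Tendsto (fun t : ℝ => c₂ * (t - t₀)) atTop atTop :=
          (tendsto_atTop_add_const_right atTop (-t₀) tendsto_id).const_mul_atTop hc₂
        have h2 : Tendsto (fun t : ℝ => -c₂ * (t - t₀)) atTop atBot := by
          have h2' := tendsto_neg_atTop_atBot.comp h1
          have heq2 : (fun t : ℝ => -c₂ * (t - t₀)) = (fun z : ℝ => -z) ∘ fun t : ℝ => c₂ * (t - t₀) := by
            funext t; simp [neg_mul]
          rw [heq2]; exact h2'
        have h3 := Real.tendsto_exp_atBot.comp h2
        have h4 := h3.const_mul (c₁ * δ₅)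
        simpa [Function.comp] using h4
      have hfinal : δ₅ ≤ 0 := by
        apply ge_of_tendsto hT
        filter_upwards [eventually_ge_atTop t₀] with t ht
        have hbt := hb t ht
        rw [hS] at hbt
        exact hbt
      linarith
  · -- main case n ≥ 1
    -- continuity facts
    have hwc : ContinuousOn w (Ici t₀) := fun t ht => (hw t ht).continuousWithinAt
    obtain ⟨heqinv, hwinvd, hWpos⟩ := winv_facts hn hw hwinv
    have hwinvc : ContinuousOn winv (Ici t₀) := fun t ht => (hwinvd t ht).continuousWithinAt
    have hccont : ContinuousOn c (Ici t₀) :=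
      ContinuousOn.congr (hwc.norm.mul hwinvc.norm) fun t ht => hc t ht
    have hμ0c : ContinuousOn (fun t => μ 0 t ζtil) (Ici t₀) := by
      have hmap : MapsTo (fun t : ℝ => (t, ζtil)) (Ici t₀) (Ici t₀ ×ˢ Ici 0) :=
        fun t ht => ⟨ht, hζ.le⟩
      exact (hμc 0).comp (continuousOn_id.prodMk continuousOn_const) hmap
    have hq : Continuous (fun t => c (max t t₀) * μ 0 (max t t₀) ζtil) :=
      (hccont.mul hμ0c).comp_continuous (continuous_id.max continuous_const)
        fun t => mem_Ici.2 (le_max_right _ _)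
    have hqe : ∀ t ≥ t₀, c (max t t₀) * μ 0 (max t t₀) ζtil = c t * μ 0 t ζtil := by
      intro t ht; rw [max_eq_left ht]
    have hcnn : ∀ t ≥ t₀, 0 ≤ c t := by
      intro t ht; rw [hc t ht]; positivity
    -- construction of solutions of (5.3) via `hexun`
    have getu : ∀ ϱ : ℝ → ℝ, ContinuousOn ϱ (Icc (t₀ - hbar) t₀) →
        (∀ t ∈ Icc (t₀ - hbar) t₀, 0 ≤ ϱ t) → (∀ t ∈ Icc (t₀ - hbar) t₀, ϱ t ≤ φbar) →
        ∃ u, IsScalSol m t₀ hbar h p c (LinL m μ ζtil) (fun _ => 0) ϱ u := by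
      intro ϱ hϱc hϱn hϱb
      set ψ : ℝ → Euc n := fun t => ϱ t • EuclideanSpace.single (⟨0, hn⟩ : Fin n) (1 : ℝ)
        with hψ
      have hnorm : ∀ t ∈ Icc (t₀ - hbar) t₀, ‖ψ t‖ = ϱ t := by
        intro t ht
        simp [hψ, norm_smul, EuclideanSpace.norm_single, abs_of_nonneg (hϱn t ht)]
      have hψc : ContinuousOn ψ (Icc (t₀ - hbar) t₀) := hϱc.smul continuousOn_const
      obtain ⟨-, -, -, -, ⟨u, hu⟩, -⟩ := hexun ψ hψc
        (fun t ht => by rw [hnorm t ht]; exact hϱb t ht)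
      exact ⟨u, hu.1, hu.2.1, fun t ht => (hu.2.2.1 t ht).trans (hnorm t ht), hu.2.2.2⟩
    -- master comparison, scalar version
    have master_s : ∀ (ϕ y : ℝ → ℝ) (η : ℝ), 0 < η →
        ContinuousOn ϕ (Icc (t₀ - hbar) t₀) → (∀ t ∈ Icc (t₀ - hbar) t₀, 0 ≤ ϕ t) →
        (∀ t ∈ Icc (t₀ - hbar) t₀, ϕ t + η ≤ min ζtil φbar) →
        IsScalSol m t₀ hbar h p c L (fun _ => 0) ϕ y →
        ∃ u, IsScalSol m t₀ hbar h p c (LinL m μ ζtil) (fun _ => 0) (fun s => ϕ s + η) u ∧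
          ((∀ s ≥ t₀, u s ≤ ζtil) → ∀ t ≥ t₀, y t < u t) := by
      intro ϕ y η hη hϕc hϕn hϕb hy
      obtain ⟨u, hu⟩ := getu (fun s => ϕ s + η) (hϕc.add continuousOn_const)
        (fun t ht => add_nonneg (hϕn t ht) hη.le)
        (fun t ht => (hϕb t ht).trans (min_le_right _ _))
      refine ⟨u, hu, fun hub => ?_⟩
      refine dom_scal hpos hhle hhb hcnn hζ hμnn h51 hp hq hqe hy hu ?_ ?_ hub
      · intro s hs; linarith
      · intro s hs
        have h1 := hϕb s hs
        have h2 : min ζtil φbar ≤ ζtil := min_le_left _ _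
        linarith
    -- master comparison, vector version
    have master_v : ∀ (φ : ℝ → Euc n) (x : ℝ → Euc n) (η : ℝ), 0 < η →
        ContinuousOn φ (Icc (t₀ - hbar) t₀) →
        (∀ t ∈ Icc (t₀ - hbar) t₀, ‖φ t‖ + η ≤ min ζtil φbar) →
        IsVecSol n m t₀ hbar h A f (fun _ => 0) φ x →
        ∃ u, IsScalSol m t₀ hbar h p c (LinL m μ ζtil) (fun _ => 0)
            (fun s => ‖φ s‖ + η) u ∧
          ((∀ s ≥ t₀, u s ≤ ζtil) → ∀ t ≥ t₀, ‖x t‖ < u t) := by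
      intro φ x η hη hφc hφb hx
      obtain ⟨u, hu⟩ := getu (fun s => ‖φ s‖ + η) (hφc.norm.add continuousOn_const)
        (fun t ht => add_nonneg (norm_nonneg _) hη.le)
        (fun t ht => (hφb t ht).trans (min_le_right _ _))
      refine ⟨u, hu, fun hub => ?_⟩
      refine dom_vec hn hpos hhle hhc hhb hfc hw0 hw hwinv hp hc hζ hμnn hLf h51 hq hqe
        hx hu ?_ ?_ hub
      · intro s hs; linarith
      · intro s hs
        have h1 := hφb s hs
        have h2 : min ζtil φbar ≤ ζtil := min_le_left _ _
        linarith
    constructor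
    · rintro ⟨hstab, hattr⟩
      obtain ⟨δζ, hδζpos, hδζprop⟩ := hstab ζtil hζ
      obtain ⟨δ₃, hδ₃pos, h₃prop⟩ := hattr
      constructor
      · constructor
        · -- scalar stability of (3.12)
          intro ε hε
          obtain ⟨δ, hδpos, hδprop⟩ := hstab (min ε ζtil) (lt_min hε hζ)
          have hδ'pos : (0:ℝ) < min δ (min ζtil φbar) / 2 :=
            div_pos (lt_min hδpos (lt_min hζ hφbar)) two_pos
          refine ⟨min δ (min ζtil φbar) / 2, hδ'pos, ?_⟩
          intro ϕ y hϕc hϕn hϕδ hy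
          obtain ⟨u, hu, hdom⟩ := master_s ϕ y (min δ (min ζtil φbar) / 2) hδ'pos hϕc hϕn
            (fun t ht => by
              have h1 := hϕδ t ht
              have h2 : min δ (min ζtil φbar) ≤ min ζtil φbar := min_le_right _ _
              linarith) hy
          have hust : ∀ t ≥ t₀, u t < min ε ζtil := by
            apply hδprop (fun s => ϕ s + min δ (min ζtil φbar) / 2) u (hϕc.add continuousOn_const)
              (fun t ht => add_nonneg (hϕn t ht) hδ'pos.le)
              (fun t ht => by
                have h1 := hϕδ t ht
                have h2 : min δ (min ζtil φbar) ≤ δ := min_le_left _ _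
                linarith) hu
          have hub : ∀ s ≥ t₀, u s ≤ ζtil :=
            fun s hs => ((hust s hs).trans_le (min_le_right _ _)).le
          intro t ht
          exact ((hdom hub t ht).trans (hust t ht)).trans_le (min_le_left _ _)
        · -- scalar attractivity of (3.12)
          have hδ'pos : (0:ℝ) < min (min δζ δ₃) (min ζtil φbar) / 2 :=
            div_pos (lt_min (lt_min hδζpos hδ₃pos) (lt_min hζ hφbar)) two_pos
          refine ⟨min (min δζ δ₃) (min ζtil φbar) / 2, hδ'pos, ?_⟩
          intro ϕ y hϕc hϕn hϕδ hy
          obtain ⟨u, hu, hdom⟩ := master_s ϕ y (min (min δζ δ₃) (min ζtil φbar) / 2)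
            hδ'pos hϕc hϕn
            (fun t ht => by
              have h1 := hϕδ t ht
              have h2 : min (min δζ δ₃) (min ζtil φbar) ≤ min ζtil φbar := min_le_right _ _
              linarith) hy
          have hhist_lt : ∀ t ∈ Icc (t₀ - hbar) t₀,
              ϕ t + min (min δζ δ₃) (min ζtil φbar) / 2 < min δζ δ₃ := by
            intro t ht
            have h1 := hϕδ t ht
            have h2 : min (min δζ δ₃) (min ζtil φbar) ≤ min δζ δ₃ := min_le_left _ _
            linarith
          have huζ : ∀ t ≥ t₀, u t < ζtil := by
            apply hδζprop _ u (hϕc.add continuousOn_const)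
              (fun t ht => add_nonneg (hϕn t ht) hδ'pos.le)
              (fun t ht => lt_of_lt_of_le (hhist_lt t ht) (min_le_left _ _)) hu
          have hub : ∀ s ≥ t₀, u s ≤ ζtil := fun s hs => (huζ s hs).le
          have hu0 : Tendsto u atTop (nhds 0) := by
            apply h₃prop _ u (hϕc.add continuousOn_const)
              (fun t ht => add_nonneg (hϕn t ht) hδ'pos.le)
              (fun t ht => lt_of_lt_of_le (hhist_lt t ht) (min_le_right _ _)) hu
          apply squeeze_zero' ?_ ?_ hu0
          · filter_upwards [eventually_ge_atTop t₀] with t ht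
            exact hy.2.1 t (by simp only [mem_Ici]; linarith)
          · filter_upwards [eventually_ge_atTop t₀] with t ht
            exact (hdom hub t ht).le
      · constructor
        · -- vector stability of (2.15)
          intro ε hε
          obtain ⟨δ, hδpos, hδprop⟩ := hstab (min ε ζtil) (lt_min hε hζ)
          have hδ'pos : (0:ℝ) < min δ (min ζtil φbar) / 2 :=
            div_pos (lt_min hδpos (lt_min hζ hφbar)) two_pos
          refine ⟨min δ (min ζtil φbar) / 2, hδ'pos, ?_⟩
          intro φ x hφc hφδ hx
          obtain ⟨u, hu, hdom⟩ := master_v φ x (min δ (min ζtil φbar) / 2) hδ'pos hφc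
            (fun t ht => by
              have h1 := hφδ t ht
              have h2 : min δ (min ζtil φbar) ≤ min ζtil φbar := min_le_right _ _
              linarith) hx
          have hust : ∀ t ≥ t₀, u t < min ε ζtil := by
            apply hδprop (fun s => ‖φ s‖ + min δ (min ζtil φbar) / 2) u (hφc.norm.add continuousOn_const)
              (fun t ht => add_nonneg (norm_nonneg _) hδ'pos.le)
              (fun t ht => by
                have h1 := hφδ t ht
                have h2 : min δ (min ζtil φbar) ≤ δ := min_le_left _ _
                linarith) hu
          have hub : ∀ s ≥ t₀, u s ≤ ζtil :=
            fun s hs => ((hust s hs).trans_le (min_le_right _ _)).le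
          intro t ht
          exact ((hdom hub t ht).trans (hust t ht)).trans_le (min_le_left _ _)
        · -- vector attractivity of (2.15)
          have hδ'pos : (0:ℝ) < min (min δζ δ₃) (min ζtil φbar) / 2 :=
            div_pos (lt_min (lt_min hδζpos hδ₃pos) (lt_min hζ hφbar)) two_pos
          refine ⟨min (min δζ δ₃) (min ζtil φbar) / 2, hδ'pos, ?_⟩
          intro φ x hφc hφδ hx
          obtain ⟨u, hu, hdom⟩ := master_v φ x (min (min δζ δ₃) (min ζtil φbar) / 2)
            hδ'pos hφc
            (fun t ht => by
              have h1 := hφδ t ht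
              have h2 : min (min δζ δ₃) (min ζtil φbar) ≤ min ζtil φbar := min_le_right _ _
              linarith) hx
          have hhist_lt : ∀ t ∈ Icc (t₀ - hbar) t₀,
              ‖φ t‖ + min (min δζ δ₃) (min ζtil φbar) / 2 < min δζ δ₃ := by
            intro t ht
            have h1 := hφδ t ht
            have h2 : min (min δζ δ₃) (min ζtil φbar) ≤ min δζ δ₃ := min_le_left _ _
            linarith
          have huζ : ∀ t ≥ t₀, u t < ζtil := by
            apply hδζprop _ u (hφc.norm.add continuousOn_const)
              (fun t ht => add_nonneg (norm_nonneg _) hδ'pos.le)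
              (fun t ht => lt_of_lt_of_le (hhist_lt t ht) (min_le_left _ _)) hu
          have hub : ∀ s ≥ t₀, u s ≤ ζtil := fun s hs => (huζ s hs).le
          have hu0 : Tendsto u atTop (nhds 0) := by
            apply h₃prop _ u (hφc.norm.add continuousOn_const)
              (fun t ht => add_nonneg (norm_nonneg _) hδ'pos.le)
              (fun t ht => lt_of_lt_of_le (hhist_lt t ht) (min_le_right _ _)) hu
          apply squeeze_zero' ?_ ?_ hu0
          · filter_upwards with t
            exact norm_nonneg _
          · filter_upwards [eventually_ge_atTop t₀] with t ht
            exact (hdom hub t ht).le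
    · rintro ⟨δ₅, hδ₅, c₁, hc₁, c₂, hc₂, hbound⟩
      have hM1 : (1:ℝ) ≤ max c₁ 1 := le_max_right _ _
      have hMc : c₁ ≤ max c₁ 1 := le_max_left _ _
      have hMpos : (0:ℝ) < max c₁ 1 := lt_of_lt_of_le one_pos hM1
      have hδ'pos : (0:ℝ) < min (min δ₅ φbar) (ζtil / (2 * max c₁ 1)) / 2 :=
        div_pos (lt_min (lt_min hδ₅ hφbar) (by positivity)) two_pos
      set δ' : ℝ := min (min δ₅ φbar) (ζtil / (2 * max c₁ 1)) / 2 with hδ'def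
      have h2δ' : 2 * δ' ≤ ζtil / (2 * max c₁ 1) := by
        have := min_le_right (min δ₅ φbar) (ζtil / (2 * max c₁ 1))
        rw [hδ'def]; linarith
      have h2δ5 : 2 * δ' ≤ δ₅ := by
        have h1 := min_le_left (min δ₅ φbar) (ζtil / (2 * max c₁ 1))
        have h2 := min_le_left δ₅ φbar
        rw [hδ'def]; linarith
      have h2δφ : 2 * δ' ≤ φbar := by
        have h1 := min_le_left (min δ₅ φbar) (ζtil / (2 * max c₁ 1))
        have h2 := min_le_right δ₅ φbar
        rw [hδ'def]; linarith
      have h2δζ : 2 * δ' ≤ ζtil := by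
        have h1 : ζtil / (2 * max c₁ 1) ≤ ζtil := by
          rw [div_le_iff₀ (by positivity)]
          nlinarith
        linarith
      have hCap : (max c₁ 1) * (2 * δ') ≤ ζtil := by
        calc (max c₁ 1) * (2 * δ') ≤ (max c₁ 1) * (ζtil / (2 * max c₁ 1)) := by
              apply mul_le_mul_of_nonneg_left h2δ' hMpos.le
          _ = ζtil / 2 := by field_simp
          _ ≤ ζtil := by linarith
      have hne : (Icc (t₀ - hbar) t₀).Nonempty := ⟨t₀, hIccne⟩
      constructor
      · -- exponential stability of (3.12)
        refine ⟨δ', hδ'pos, c₁, hc₁, c₂, hc₂, ?_⟩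
        intro ϕ y hϕc hϕn hϕδ hy t ht
        set S := sSup (ϕ '' Icc (t₀ - hbar) t₀) with hSdef
        set Et := Real.exp (-c₂ * (t - t₀)) with hEtdef
        have hbdd : BddAbove (ϕ '' Icc (t₀ - hbar) t₀) :=
          (isCompact_Icc.image_of_continuousOn hϕc).bddAbove
        have hleS : ∀ s ∈ Icc (t₀ - hbar) t₀, ϕ s ≤ S :=
          fun s hs => le_csSup hbdd ⟨s, hs, rfl⟩
        have hS0 : 0 ≤ S := le_trans (hϕn t₀ hIccne) (hleS t₀ hIccne)
        have hSδ : S ≤ δ' := csSup_le (hne.image _)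
          (by rintro _ ⟨s, hs, rfl⟩; exact hϕδ s hs)
        have hE : (0:ℝ) < Et := Real.exp_pos _
        have key : ∀ η : ℝ, 0 < η → η ≤ δ' → y t ≤ c₁ * (S + η) * Et := by
          intro η hη hηδ
          obtain ⟨u, hu, hdom⟩ := master_s ϕ y η hη hϕc hϕn
            (fun s hs => by
              have h1 := hϕδ s hs
              exact le_min (by linarith) (by linarith)) hy
          have hSϱ : sSup ((fun s => ϕ s + η) '' Icc (t₀ - hbar) t₀) ≤ S + η := by
            apply csSup_le (hne.image _)
            rintro _ ⟨s, hs, rfl⟩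
            have := hleS s hs
            show _ + η ≤ S + η
            linarith
          have hϱ5 : ∀ s ∈ Icc (t₀ - hbar) t₀, ϕ s + η ≤ δ₅ := by
            intro s hs; have := hϕδ s hs; linarith
          have hub_exp := hbound (fun s => ϕ s + η) u (hϕc.add continuousOn_const)
            (fun s hs => add_nonneg (hϕn s hs) hη.le) hϱ5 hu
          have hub : ∀ s ≥ t₀, u s ≤ ζtil := by
            intro s hs
            have h1 := hub_exp s hs
            have h2 : Real.exp (-c₂ * (s - t₀)) ≤ 1 := by
              rw [Real.exp_le_one_iff]
              nlinarith
            have h3 : c₁ * sSup ((fun s => ϕ s + η) '' Icc (t₀ - hbar) t₀)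
                * Real.exp (-c₂ * (s - t₀)) ≤ c₁ * (S + η) * 1 := by
              apply mul_le_mul (mul_le_mul_of_nonneg_left hSϱ hc₁.le) h2
                (Real.exp_pos _).le
              positivity
            have h4 : c₁ * (S + η) ≤ ζtil := by
              have h5 : S + η ≤ 2 * δ' := by linarith
              calc c₁ * (S + η) ≤ (max c₁ 1) * (2 * δ') :=
                    mul_le_mul hMc h5 (by linarith) hMpos.le
                _ ≤ ζtil := hCap
            linarith [mul_one (c₁ * (S + η))]
          calc y t ≤ u t := (hdom hub t ht).le
            _ ≤ c₁ * sSup ((fun s => ϕ s + η) '' Icc (t₀ - hbar) t₀) * Et := hub_exp t ht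
            _ ≤ c₁ * (S + η) * Et :=
                mul_le_mul_of_nonneg_right (mul_le_mul_of_nonneg_left hSϱ hc₁.le) hE.le
        by_contra hcon
        push_neg at hcon
        have hd0 : 0 < y t - c₁ * S * Et := by linarith
        have hηd : 0 < min δ' ((y t - c₁ * S * Et) / (2 * c₁ * Et)) :=
          lt_min hδ'pos (by positivity)
        have hkey := key _ hηd (min_le_left _ _)
        have hη2 : min δ' ((y t - c₁ * S * Et) / (2 * c₁ * Et))
            ≤ (y t - c₁ * S * Et) / (2 * c₁ * Et) := min_le_right _ _
        have h6 : min δ' ((y t - c₁ * S * Et) / (2 * c₁ * Et)) * (2 * c₁ * Et)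
            ≤ y t - c₁ * S * Et := (le_div_iff₀ (by positivity)).1 hη2
        have hid : c₁ * (S + min δ' ((y t - c₁ * S * Et) / (2 * c₁ * Et))) * Et
            = c₁ * S * Et
              + min δ' ((y t - c₁ * S * Et) / (2 * c₁ * Et)) * (2 * c₁ * Et) / 2 := by
          ring
        have hpos2 : 0 < min δ' ((y t - c₁ * S * Et) / (2 * c₁ * Et)) * (2 * c₁ * Et) :=
          mul_pos hηd (by positivity)
        linarith
      · -- exponential stability of (2.15)
        refine ⟨δ', hδ'pos, c₁, hc₁, c₂, hc₂, ?_⟩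
        intro φ x hφc hφδ hx t ht
        set S := sSup ((fun s => ‖φ s‖) '' Icc (t₀ - hbar) t₀) with hSdef
        set Et := Real.exp (-c₂ * (t - t₀)) with hEtdef
        have hbdd : BddAbove ((fun s => ‖φ s‖) '' Icc (t₀ - hbar) t₀) :=
          (isCompact_Icc.image_of_continuousOn hφc.norm).bddAbove
        have hleS : ∀ s ∈ Icc (t₀ - hbar) t₀, ‖φ s‖ ≤ S :=
          fun s hs => le_csSup hbdd ⟨s, hs, rfl⟩
        have hS0 : 0 ≤ S := le_trans (norm_nonneg _) (hleS t₀ hIccne)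
        have hSδ : S ≤ δ' := csSup_le (hne.image _)
          (by rintro _ ⟨s, hs, rfl⟩; exact hφδ s hs)
        have hE : (0:ℝ) < Et := Real.exp_pos _
        have key : ∀ η : ℝ, 0 < η → η ≤ δ' → ‖x t‖ ≤ c₁ * (S + η) * Et := by
          intro η hη hηδ
          obtain ⟨u, hu, hdom⟩ := master_v φ x η hη hφc
            (fun s hs => by
              have h1 := hφδ s hs
              exact le_min (by linarith) (by linarith)) hx
          have hSϱ : sSup ((fun s => ‖φ s‖ + η) '' Icc (t₀ - hbar) t₀) ≤ S + η := by
            apply csSup_le (hne.image _)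
            rintro _ ⟨s, hs, rfl⟩
            have := hleS s hs
            show _ + η ≤ S + η
            linarith
          have hϱ5 : ∀ s ∈ Icc (t₀ - hbar) t₀, ‖φ s‖ + η ≤ δ₅ := by
            intro s hs; have := hφδ s hs; linarith
          have hub_exp := hbound (fun s => ‖φ s‖ + η) u (hφc.norm.add continuousOn_const)
            (fun s hs => add_nonneg (norm_nonneg _) hη.le) hϱ5 hu
          have hub : ∀ s ≥ t₀, u s ≤ ζtil := by
            intro s hs
            have h1 := hub_exp s hs
            have h2 : Real.exp (-c₂ * (s - t₀)) ≤ 1 := by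
              rw [Real.exp_le_one_iff]
              nlinarith
            have h3 : c₁ * sSup ((fun s => ‖φ s‖ + η) '' Icc (t₀ - hbar) t₀)
                * Real.exp (-c₂ * (s - t₀)) ≤ c₁ * (S + η) * 1 := by
              apply mul_le_mul (mul_le_mul_of_nonneg_left hSϱ hc₁.le) h2
                (Real.exp_pos _).le
              positivity
            have h4 : c₁ * (S + η) ≤ ζtil := by
              have h5 : S + η ≤ 2 * δ' := by linarith
              calc c₁ * (S + η) ≤ (max c₁ 1) * (2 * δ') :=
                    mul_le_mul hMc h5 (by linarith) hMpos.le
                _ ≤ ζtil := hCap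
            linarith [mul_one (c₁ * (S + η))]
          calc ‖x t‖ ≤ u t := (hdom hub t ht).le
            _ ≤ c₁ * sSup ((fun s => ‖φ s‖ + η) '' Icc (t₀ - hbar) t₀) * Et := hub_exp t ht
            _ ≤ c₁ * (S + η) * Et :=
                mul_le_mul_of_nonneg_right (mul_le_mul_of_nonneg_left hSϱ hc₁.le) hE.le
        by_contra hcon
        push_neg at hcon
        have hd0 : 0 < ‖x t‖ - c₁ * S * Et := by linarith
        have hηd : 0 < min δ' ((‖x t‖ - c₁ * S * Et) / (2 * c₁ * Et)) :=
          lt_min hδ'pos (by positivity)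
        have hkey := key _ hηd (min_le_left _ _)
        have hη2 : min δ' ((‖x t‖ - c₁ * S * Et) / (2 * c₁ * Et))
            ≤ (‖x t‖ - c₁ * S * Et) / (2 * c₁ * Et) := min_le_right _ _
        have h6 : min δ' ((‖x t‖ - c₁ * S * Et) / (2 * c₁ * Et)) * (2 * c₁ * Et)
            ≤ ‖x t‖ - c₁ * S * Et := (le_div_iff₀ (by positivity)).1 hη2
        have hid : c₁ * (S + min δ' ((‖x t‖ - c₁ * S * Et) / (2 * c₁ * Et))) * Et
            = c₁ * S * Et
              + min δ' ((‖x t‖ - c₁ * S * Et) / (2 * c₁ * Et)) * (2 * c₁ * Et) / 2 := by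
          ring
        have hpos2 : 0 < min δ' ((‖x t‖ - c₁ * S * Et) / (2 * c₁ * Et)) * (2 * c₁ * Et) :=
          mul_pos hηd (by positivity)
        linarith
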